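/- Let Λ_N, Λ_M, μ, κ, γ, ν, β be positive, δ ≥ 0, σ ≥ 0, and set α* = κ(γ+μ)/β, S* = Λ_N/μ, U* = Λ_M/κ, γ̄ = γ+μ, δ̄ = δ+γ+μ. Let J be the Jacobian of the right-hand side of the two-strain dengue model (with N = S*, M = U*) at the disease-free equilibrium E₀ = (S*,0,…,0,U*,0,0,0) with α = α*. For any v₂, v₃ ∈ ℝ, define v ∈ ℝ¹⁴ by v₁ = v₄ = v₅ = v₆ = v₇ = v₁₀ = v₁₁ = 0, v₈ = (γ̄/δ̄)v₃, v₉ = (γ̄/δ̄)v₂, v₁₂ = (α*S*/(κU*))v₂, v₁₃ = (α*S*/(κU*))v₃, v₁₄ = (α*S*/(κU*))(v₂+v₃). Then vᵀ·J = 0, i.e. v is a left eigenvector of J with eigenvalue 0. -/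

import Mathlib

/-- Right-hand side of the two-strain dengue model, as a vector field on `ℝ¹⁴`.
State ordering: `(S, I₁, I₂, R₁, R₂, S₁, S₂, I₁₂, I₂₁, R, U, V₁, V₂, V₁₂)`. -/
noncomputable def dengueRHS (ΛN ΛM μ κ γ ν δ α σ β N M : ℝ)
    (x : Fin 14 → ℝ) : Fin 14 → ℝ :=
  ![ΛN - α / M * x 0 * (x 11 + x 12 + 2 * x 13) - μ * x 0,
    α / M * x 0 * (x 11 + x 13) - (γ + μ) * x 1,
    α / M * x 0 * (x 12 + x 13) - (γ + μ) * x 2,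
    γ * x 1 - (ν + μ) * x 3,
    γ * x 2 - (ν + μ) * x 4,
    ν * x 3 - σ / M * x 5 * (x 12 + x 13) - μ * x 5,
    ν * x 4 - σ / M * x 6 * (x 11 + x 13) - μ * x 6,
    σ / M * x 5 * (x 12 + x 13) - (γ + μ + δ) * x 7,
    σ / M * x 6 * (x 11 + x 13) - (γ + μ + δ) * x 8,
    γ * (x 7 + x 8) - μ * x 9,
    ΛM - β / N * x 10 * (x 1 + x 2 + x 7 + x 8) - κ * x 10,
    β / N * x 10 * (x 1 + x 8) - β / N * x 11 * (x 2 + x 7) - κ * x 11,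
    β / N * x 10 * (x 2 + x 7) - β / N * x 12 * (x 1 + x 8) - κ * x 12,
    β / N * x 11 * (x 2 + x 7) + β / N * x 12 * (x 1 + x 8) - κ * x 13]

set_option maxHeartbeats 1000000 in
/-- At the critical value `α* = κ(γ+μ)/β` (where `R₀ = 1`), the vector `v` with
components `v₁ = v₄ = v₅ = v₆ = v₇ = v₁₀ = v₁₁ = 0`, `v₈ = (γ̄/δ̄)v₃`,
`v₉ = (γ̄/δ̄)v₂`, `v₁₂ = (α*S*/(κU*))v₂`, `v₁₃ = (α*S*/(κU*))v₃`,
`v₁₄ = (α*S*/(κU*))(v₂+v₃)` is a left null eigenvector of the Jacobian `J` of the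
two-strain dengue model at the disease-free equilibrium `E₀ = (S*,0,…,0,U*,0,0,0)`
(with `N = S*`, `M = U*`): `vᵀ·J = 0`. -/
theorem dengue_left_null_eigenvector
    (ΛN ΛM μ κ γ ν β δ σ : ℝ)
    (hΛN : 0 < ΛN) (hΛM : 0 < ΛM) (hμ : 0 < μ) (hκ : 0 < κ) (hγ : 0 < γ)
    (hν : 0 < ν) (hβ : 0 < β) (hδ : 0 ≤ δ) (hσ : 0 ≤ σ)
    (αstar Sstar Ustar γbar δbar : ℝ)
    (hαstar : αstar = κ * (γ + μ) / β)
    (hSstar : Sstar = ΛN / μ) (hUstar : Ustar = ΛM / κ)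
    (hγbar : γbar = γ + μ) (hδbar : δbar = δ + γ + μ)
    (J : Matrix (Fin 14) (Fin 14) ℝ)
    (hJ : HasFDerivAt (dengueRHS ΛN ΛM μ κ γ ν δ αstar σ β Sstar Ustar)
      (LinearMap.toContinuousLinearMap (Matrix.mulVecLin J))
      ![Sstar, 0, 0, 0, 0, 0, 0, 0, 0, 0, Ustar, 0, 0, 0])
    (v₂ v₃ : ℝ) :
    Matrix.vecMul
      ![0, v₂, v₃, 0, 0, 0, 0,
        γbar / δbar * v₃, γbar / δbar * v₂, 0, 0,
        αstar * Sstar / (κ * Ustar) * v₂,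
        αstar * Sstar / (κ * Ustar) * v₃,
        αstar * Sstar / (κ * Ustar) * (v₂ + v₃)] J = 0 := by
  subst hαstar hSstar hUstar hγbar hδbar
  have hμ' : μ ≠ 0 := hμ.ne'
  have hκ' : κ ≠ 0 := hκ.ne'
  have hβ' : β ≠ 0 := hβ.ne'
  have hΛN' : ΛN ≠ 0 := hΛN.ne'
  have hΛM' : ΛM ≠ 0 := hΛM.ne'
  have hδb : δ + γ + μ ≠ 0 := by positivity
  have hγb : γ + μ ≠ 0 := by positivity
  set w : Fin 14 → ℝ :=
    ![0, v₂, v₃, 0, 0, 0, 0,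
        (γ + μ) / (δ + γ + μ) * v₃, (γ + μ) / (δ + γ + μ) * v₂, 0, 0,
        κ * (γ + μ) / β * (ΛN / μ) / (κ * (ΛM / κ)) * v₂,
        κ * (γ + μ) / β * (ΛN / μ) / (κ * (ΛM / κ)) * v₃,
        κ * (γ + μ) / β * (ΛN / μ) / (κ * (ΛM / κ)) * (v₂ + v₃)] with hwdef
  set p : Fin 14 → ℝ := ![ΛN / μ, 0, 0, 0, 0, 0, 0, 0, 0, 0, ΛM / κ, 0, 0, 0] with hpdef
  have hp : ∀ i : Fin 14, p i =
      if i = 0 then ΛN / μ else if i = 10 then ΛM / κ else 0 := by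
    intro i; rw [hpdef]; fin_cases i <;> rfl
  funext j
  -- key algebraic identity along the coordinate line in direction j
  have key : (fun t : ℝ => dotProduct w
      (dengueRHS ΛN ΛM μ κ γ ν δ (κ * (γ + μ) / β) σ β (ΛN / μ) (ΛM / κ)
        (p + t • (Pi.single j 1 : Fin 14 → ℝ)))) = fun _ => (0 : ℝ) := by
    funext t
    fin_cases j <;>
      · simp (config := { decide := true }) only [hp, hwdef, dengueRHS,
          dotProduct, Fin.sum_univ_succ, Finset.univ_eq_empty,
          Finset.sum_empty, Matrix.cons_val_zero, Matrix.cons_val_succ,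
          Pi.add_apply, Pi.smul_apply, Pi.single_apply, smul_eq_mul]
        norm_num
        try field_simp
        try ring
  -- the line through p in direction j
  have hline : HasDerivAt (fun t : ℝ => p + t • (Pi.single j 1 : Fin 14 → ℝ)) ((Pi.single j 1 : Fin 14 → ℝ)) 0 := by
    simpa using ((hasDerivAt_id (0:ℝ)).smul_const ((Pi.single j 1 : Fin 14 → ℝ))).const_add p
  have hJ' : HasFDerivAt
      (dengueRHS ΛN ΛM μ κ γ ν δ (κ * (γ + μ) / β) σ β (ΛN / μ) (ΛM / κ))
      (LinearMap.toContinuousLinearMap (Matrix.mulVecLin J))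
      (p + (0:ℝ) • (Pi.single j 1 : Fin 14 → ℝ)) := by
    simpa [hpdef] using hJ
  have hcomp : HasDerivAt (fun t : ℝ =>
      dengueRHS ΛN ΛM μ κ γ ν δ (κ * (γ + μ) / β) σ β (ΛN / μ) (ΛM / κ)
        (p + t • (Pi.single j 1 : Fin 14 → ℝ))) (J.mulVec ((Pi.single j 1 : Fin 14 → ℝ))) 0 := by
    have := hJ'.comp_hasDerivAt 0 hline
    exact this
  have hdot : HasDerivAt (fun t : ℝ => dotProduct w
      (dengueRHS ΛN ΛM μ κ γ ν δ (κ * (γ + μ) / β) σ β (ΛN / μ) (ΛM / κ)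
        (p + t • (Pi.single j 1 : Fin 14 → ℝ))))
      (dotProduct w (J.mulVec ((Pi.single j 1 : Fin 14 → ℝ)))) 0 := by
    simp only [dotProduct]
    exact HasDerivAt.fun_sum fun i _ =>
      HasDerivAt.const_mul (w i) (hasDerivAt_pi.1 hcomp i)
  have hz : dotProduct w (J.mulVec ((Pi.single j 1 : Fin 14 → ℝ))) = 0 := by
    refine hdot.unique ?_
    rw [key]
    exact hasDerivAt_const 0 0
  calc Matrix.vecMul w J j = dotProduct w (J.mulVec ((Pi.single j 1 : Fin 14 → ℝ))) := by
        simp [Matrix.vecMul, Matrix.mulVec, dotProduct, Pi.single_apply,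
          Finset.mul_sum]
    _ = 0 := hz
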